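/- Let p be an odd prime with p ≡ 1 (mod 4) and p > 5, and let n ≥ 1 be a natural number with n ≡ 0 (mod 3). Then for every integer q, the norm of the n-th generalized Fibonacci-Lucas quaternion G_n^{p,q} in the quaternion algebra H_ℚ(−1, p) is nonzero. -/

import Mathlib

open scoped Quaternion

/-- The Lucas sequence: `l 0 = 2`, `l 1 = 1`, `l (n+2) = l (n+1) + l n`. -/
def lucas : ℕ → ℕ
  | 0 => 2
  | 1 => 1
  | n + 2 => lucas (n + 1) + lucas n

/-- The generalized Fibonacci-Lucas numbers `g n ^ {p,q} = p * f (n-1) + q * l n` (for `n ≥ 1`). -/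
def g (p q : ℤ) (n : ℕ) : ℤ := p * Nat.fib (n - 1) + q * lucas n

/-- The `n`-th generalized Fibonacci-Lucas quaternion
`G_n^{p,q} = g_n^{p,q} + g_{n+1}^{p,q} i + g_{n+2}^{p,q} j + g_{n+3}^{p,q} k` in `ℍ[ℚ, α, β]`. -/
def G (α β : ℚ) (p q : ℤ) (n : ℕ) : ℍ[ℚ, α, β] :=
  ⟨(g p q n : ℚ), (g p q (n + 1) : ℚ), (g p q (n + 2) : ℚ), (g p q (n + 3) : ℚ)⟩

/-- The norm of a generalized quaternion:
`n(a) = a₁² - α a₂² - β a₃² + α β a₄²`. -/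
def qnorm (α β : ℚ) (a : ℍ[ℚ, α, β]) : ℚ :=
  a.re ^ 2 - α * a.imI ^ 2 - β * a.imJ ^ 2 + α * β * a.imK ^ 2

lemma fib_lucas_mod2 (k : ℕ) :
    ((Nat.fib (3*k) : ZMod 2) = 0 ∧ (Nat.fib (3*k+1) : ZMod 2) = 1 ∧
      (Nat.fib (3*k+2) : ZMod 2) = 1) ∧
    ((lucas (3*k) : ZMod 2) = 0 ∧ (lucas (3*k+1) : ZMod 2) = 1 ∧
      (lucas (3*k+2) : ZMod 2) = 1) := by
  induction k with
  | zero => decide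
  | succ k ih =>
    obtain ⟨⟨f0, f1, f2⟩, ⟨l0, l1, l2⟩⟩ := ih
    have e3 : 3*(k+1) = (3*k+1) + 2 := by ring
    have e4 : 3*(k+1)+1 = (3*k+2) + 2 := by ring
    have e5 : 3*(k+1)+2 = (3*(k+1)) + 2 := by ring
    have hf3 : (Nat.fib (3*(k+1)) : ZMod 2) = 0 := by
      rw [e3, Nat.fib_add_two]; push_cast; rw [f2, f1]; decide
    have hl3 : (lucas (3*(k+1)) : ZMod 2) = 0 := by
      rw [e3, show lucas ((3*k+1)+2) = lucas (3*k+1+1) + lucas (3*k+1) from rfl]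
      push_cast
      rw [show 3*k+1+1 = 3*k+2 from rfl] at *
      rw [l2, l1]; decide
    have hf4 : (Nat.fib (3*(k+1)+1) : ZMod 2) = 1 := by
      rw [e4, Nat.fib_add_two]; push_cast
      rw [show 3*k+2+1 = 3*(k+1) from by ring] at *
      rw [hf3, f2]; decide
    have hl4 : (lucas (3*(k+1)+1) : ZMod 2) = 1 := by
      rw [e4, show lucas ((3*k+2)+2) = lucas (3*k+2+1) + lucas (3*k+2) from rfl]
      push_cast
      rw [show 3*k+2+1 = 3*(k+1) from by ring] at *
      rw [hl3, l2]; decide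
    have hf5 : (Nat.fib (3*(k+1)+2) : ZMod 2) = 1 := by
      rw [e5, Nat.fib_add_two]; push_cast
      rw [show 3*(k+1)+1 = 3*(k+1)+1 from rfl] at *
      rw [hf3, hf4]; decide
    have hl5 : (lucas (3*(k+1)+2) : ZMod 2) = 1 := by
      rw [e5, show lucas ((3*(k+1))+2) = lucas (3*(k+1)+1) + lucas (3*(k+1)) from rfl]
      push_cast
      rw [hl3, hl4]; decide
    exact ⟨⟨hf3, hf4, hf5⟩, ⟨hl3, hl4, hl5⟩⟩

theorem norm_ne_zero_of_prime_gt_five (p : ℕ) (hp : Nat.Prime p) (hodd : Odd p)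
    (hp4 : p % 4 = 1) (hp5 : 5 < p) (n : ℕ) (hn : 1 ≤ n) (hn3 : n % 3 = 0) (q : ℤ) :
    qnorm (-1) (p : ℚ) (G (-1) (p : ℚ) (p : ℤ) q n) ≠ 0 := by
  obtain ⟨m, hm⟩ := Nat.dvd_of_mod_eq_zero hn3
  obtain ⟨k, rfl⟩ : ∃ k, m = k + 1 := ⟨m - 1, by omega⟩
  subst hm
  obtain ⟨t, rfl⟩ := hodd
  set n : ℕ := 3 * (k + 1) with hndef
  set p : ℕ := 2 * t + 1 with hpdef
  set M : ℤ := (g p q n)^2 + (g p q (n+1))^2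
      - (p : ℤ) * ((g p q (n+2))^2 + (g p q (n+3))^2) with hM
  have hqn : qnorm (-1) (p : ℚ) (G (-1) (p : ℚ) (p : ℤ) q n) = (M : ℚ) := by
    simp only [qnorm, G, hM]
    push_cast
    ring
  rw [hqn, Int.cast_ne_zero]
  intro h0
  have h2 : (M : ZMod 2) = 0 := by rw [h0]; simp
  obtain ⟨⟨_, _, f2⟩, _⟩ := fib_lucas_mod2 k
  obtain ⟨⟨f3, f4, f5⟩, ⟨l3, l4, l5⟩⟩ := fib_lucas_mod2 (k + 1)
  obtain ⟨_, ⟨l6, _, _⟩⟩ := fib_lucas_mod2 (k + 2)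
  have h1 : (M : ZMod 2) = 1 := by
    have e1 : n - 1 = 3*k+2 := by omega
    have e2 : n + 1 - 1 = 3*(k+1) := by omega
    have e3 : n + 2 - 1 = 3*(k+1)+1 := by omega
    have e4 : n + 3 - 1 = 3*(k+1)+2 := by omega
    have e5 : n + 1 = 3*(k+1)+1 := by omega
    have e6 : n + 2 = 3*(k+1)+2 := by omega
    have e7 : n + 3 = 3*(k+2) := by omega
    have e8 : 3*(k+2) - 1 = 3*(k+1)+2 := by omega
    have en : n = 3*(k+1) := hndef
    simp only [hM, g, e1, e2, e3, e4, e5, e6, e7, e8, en, hpdef]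
    push_cast
    rw [show 3*(k+1) - 1 = 3*k+2 by omega, show 3*(k+1)+3 = 3*(k+2) by omega]
    rw [f2, f3, f4, f5, l3, l4, l5, l6]
    have h2z : (2 : ZMod 2) = 0 := rfl
    linear_combination (-1 - q - 4*(t:ZMod 2) - 4*(t:ZMod 2)*q - (t:ZMod 2)*q^2
      - 10*(t:ZMod 2)^2 - 4*(t:ZMod 2)^2*q - 8*(t:ZMod 2)^3) * h2z
  rw [h2] at h1
  exact zero_ne_one h1
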